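/- Assume the continuum hypothesis (2^ω = ω₁). Then the poset ℂ is ω₂-c.c.: every antichain in ℂ (i.e., every set of pairwise incompatible conditions, where p and q are incompatible iff no condition extends both) has cardinality at most ω₁. -/

import Mathlib

noncomputable section

abbrev Ordi : Type 1 := Ordinal.{0}

/-- The ordinal `ω₁`. -/
def w1 : Ordi := (Cardinal.aleph 1).ord

/-- The ordinal `ω₂`. -/
def w2 : Ordi := (Cardinal.aleph 2).ord

/-- A condition in the poset `ℂ`: a partial function (represented by a total
function `val` together with its domain `dom`) whose domain is a countable
subset of `⋃ { {β} × β : ω₁ ≤ β < ω₂ }` and which, on each section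
`{β} × β`, is an injective function into `ω₁`. -/
structure CCond where
  dom : Set (Ordi × Ordi)
  val : Ordi × Ordi → Ordi
  dom_countable : dom.Countable
  dom_subset : ∀ x ∈ dom, w1 ≤ x.1 ∧ x.1 < w2 ∧ x.2 < x.1
  mapsTo : ∀ x ∈ dom, val x < w1
  injOn : ∀ β γ γ' : Ordi, (β, γ) ∈ dom → (β, γ') ∈ dom →
    val (β, γ) = val (β, γ') → γ = γ'

/-- The order on `ℂ`: `q ≤ p` iff `p ⊆ q` as partial functions. -/
def CLe (q p : CCond) : Prop :=
  p.dom ⊆ q.dom ∧ ∀ x ∈ p.dom, q.val x = p.val x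

/-- Two conditions in `ℂ` are compatible iff some condition extends both. -/
def CCompatible (p q : CCond) : Prop :=
  ∃ r : CCond, CLe r p ∧ CLe r q

open Cardinal Set Ordinal
open scoped Classical

abbrev K0 : Cardinal.{1} := Cardinal.aleph0
abbrev K1 : Cardinal.{1} := Cardinal.aleph 1

lemma lift_aleph1 : Cardinal.lift.{1} (Cardinal.aleph (1:Ordinal.{0})) = K1 := by
  rw [Cardinal.lift_aleph]; norm_num

lemma lift_aleph0' : Cardinal.lift.{1} (Cardinal.aleph (0:Ordinal.{0})) = K0 := by
  rw [Cardinal.lift_aleph]; norm_num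

lemma aleph2_eq : (Cardinal.aleph (2:Ordinal.{0})) = Order.succ (Cardinal.aleph 1) := by
  rw [show (2:Ordinal.{0}) = Order.succ 1 by norm_num, Cardinal.aleph_succ]

lemma aleph1_eq : (Cardinal.aleph (1:Ordinal.{0})) = Order.succ (Cardinal.aleph 0) := by
  rw [show (1:Ordinal.{0}) = Order.succ 0 by norm_num, Cardinal.aleph_succ]

/-- parametric: `o < (succ (aleph i)).ord ↔ #(Iio o) ≤ lift (aleph i)` -/
lemma lt_succ_ord_iff (i : Ordinal.{0}) (o : Ordi) :
    o < (Order.succ (Cardinal.aleph i)).ord ↔ #(Set.Iio o) ≤ Cardinal.lift.{1} (Cardinal.aleph i) := by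
  rw [Cardinal.lt_ord, Order.lt_succ_iff, Ordinal.mk_Iio_ordinal, Cardinal.lift_le]

lemma mk_Iio_w2_le {o : Ordi} (h : o < w2) : #(Set.Iio o) ≤ K1 := by
  rw [← lift_aleph1]
  exact (lt_succ_ord_iff 1 o).mp (by rwa [← aleph2_eq])

lemma lt_w2_of_mk {o : Ordi} (h : #(Set.Iio o) ≤ K1) : o < w2 := by
  rw [w2, aleph2_eq]
  exact (lt_succ_ord_iff 1 o).mpr (by rwa [lift_aleph1])

lemma w1_lt_w2 : w1 < w2 := by
  rw [w1, w2]
  exact Cardinal.ord_lt_ord.mpr (Cardinal.aleph_lt_aleph.mpr (by norm_num))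

lemma w1_isLimit : Order.IsSuccLimit w1 := Cardinal.isSuccLimit_ord (Cardinal.aleph0_le_aleph 1)
lemma w2_isLimit : Order.IsSuccLimit w2 := Cardinal.isSuccLimit_ord (Cardinal.aleph0_le_aleph 2)
lemma w1_pos : (0:Ordi) < w1 := w1_isLimit.pos
lemma w2_pos : (0:Ordi) < w2 := w2_isLimit.pos

/-- sup of a small family of ordinals below `w2` is below `w2`. -/
lemma sSup_lt_w2 {S : Set Ordi} (hb : ∀ y ∈ S, y < w2) (hS : #S ≤ K1) : sSup S < w2 := by
  rcases S.eq_empty_or_nonempty with rfl | hne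
  · simpa using w2_pos
  have hbdd : BddAbove S := ⟨w2, fun y hy => (hb y hy).le⟩
  apply lt_w2_of_mk
  have hsub : Set.Iio (sSup S) ⊆ ⋃ (y : S), Set.Iio y.1 := by
    intro z hz
    obtain ⟨y, hy, hzy⟩ := exists_lt_of_lt_csSup hne hz
    exact Set.mem_iUnion.mpr ⟨⟨y, hy⟩, hzy⟩
  calc #(Set.Iio (sSup S)) ≤ #(⋃ (y : S), Set.Iio y.1) := Cardinal.mk_le_mk_of_subset hsub
    _ ≤ Cardinal.sum (fun y : S => #(Set.Iio y.1)) := Cardinal.mk_iUnion_le_sum_mk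
    _ ≤ Cardinal.sum (fun _ : S => K1) :=
        Cardinal.sum_le_sum _ _ (fun y => mk_Iio_w2_le (hb y.1 y.2))
    _ = #S * K1 := by simp [Cardinal.sum_const']
    _ ≤ K1 * K1 := by exact mul_le_mul_left hS _
    _ = K1 := Cardinal.mul_eq_self (Cardinal.aleph0_le_aleph 1)

/-- sup of a countable family of ordinals below `w1` is below `w1`. -/
lemma sSup_lt_w1 {S : Set Ordi} (hb : ∀ y ∈ S, y < w1) (hS : S.Countable) : sSup S < w1 := by
  rcases S.eq_empty_or_nonempty with rfl | hne
  · simpa using w1_pos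
  have hK : #S ≤ K0 := Cardinal.le_aleph0_iff_set_countable.mpr hS
  have hsub : Set.Iio (sSup S) ⊆ ⋃ (y : S), Set.Iio y.1 := by
    intro z hz
    obtain ⟨y, hy, hzy⟩ := exists_lt_of_lt_csSup hne hz
    exact Set.mem_iUnion.mpr ⟨⟨y, hy⟩, hzy⟩
  have key : #(Set.Iio (sSup S)) ≤ K0 := by
    calc #(Set.Iio (sSup S)) ≤ #(⋃ (y : S), Set.Iio y.1) := Cardinal.mk_le_mk_of_subset hsub
      _ ≤ Cardinal.sum (fun y : S => #(Set.Iio y.1)) := Cardinal.mk_iUnion_le_sum_mk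
      _ ≤ Cardinal.sum (fun _ : S => K0) := by
          refine Cardinal.sum_le_sum _ _ (fun y => ?_)
          rw [← lift_aleph0']
          exact (lt_succ_ord_iff 0 y.1).mp (by rw [← aleph1_eq]; exact hb y.1 y.2)
      _ = #S * K0 := by simp [Cardinal.sum_const']
      _ ≤ K0 * K0 := by exact mul_le_mul_left hK _
      _ = K0 := by simp
  rw [w1, aleph1_eq]
  exact (lt_succ_ord_iff 0 _).mpr (by rw [lift_aleph0']; exact key)

/-- pigeonhole: a non-small set of ordinals can't have all fibers small
under a map into a small type. -/
lemma pigeon {I : Set Ordi} (hI : ¬ #I ≤ K1) {T : Type 1} (hT : #T ≤ K1)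
    (f : Ordi → T) : ∃ t : T, ¬ #({ξ ∈ I | f ξ = t}) ≤ K1 := by
  by_contra hcon
  push_neg at hcon
  apply hI
  have hsub : I ⊆ ⋃ (t : T), {ξ ∈ I | f ξ = t} := fun ξ hξ =>
    Set.mem_iUnion.mpr ⟨f ξ, hξ, rfl⟩
  calc #I ≤ #(⋃ (t : T), {ξ ∈ I | f ξ = t}) := Cardinal.mk_le_mk_of_subset hsub
    _ ≤ Cardinal.sum (fun t : T => #({ξ ∈ I | f ξ = t})) := Cardinal.mk_iUnion_le_sum_mk
    _ ≤ Cardinal.sum (fun _ : T => K1) := Cardinal.sum_le_sum _ _ (fun t => hcon t)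
    _ = #T * K1 := by simp [Cardinal.sum_const']
    _ ≤ K1 * K1 := mul_le_mul_left hT _
    _ = K1 := Cardinal.mul_eq_self (Cardinal.aleph0_le_aleph 1)

lemma K1_pow_K0 (hCH : (2 : Cardinal.{1}) ^ Cardinal.aleph0 = Cardinal.aleph 1) :
    K1 ^ K0 = K1 := by
  show (Cardinal.aleph 1 : Cardinal.{1}) ^ (Cardinal.aleph0 : Cardinal.{1}) = Cardinal.aleph 1
  rw [← hCH, ← Cardinal.power_mul, Cardinal.aleph0_mul_aleph0]

/-- number of countable subsets of a `≤ ℵ₁`-sized set of ordinals, under CH -/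
lemma mk_countable_subsets (hCH : (2 : Cardinal.{1}) ^ Cardinal.aleph0 = Cardinal.aleph 1)
    {δ : Ordi} (hδ : δ < w2) :
    #{S : Set Ordi // S ⊆ Set.Iio δ ∧ S.Countable} ≤ K1 := by
  have h1 : #{S : Set Ordi // S ⊆ Set.Iio δ ∧ S.Countable}
      = #{S : Set Ordi // S ⊆ Set.Iio δ ∧ #S ≤ K0} := by
    apply Cardinal.mk_congr
    exact Equiv.subtypeEquivRight (fun S => by
      rw [Cardinal.le_aleph0_iff_set_countable])
  rw [h1]
  calc #{S : Set Ordi // S ⊆ Set.Iio δ ∧ #S ≤ K0}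
      ≤ max #(Set.Iio δ) Cardinal.aleph0 ^ K0 := Cardinal.mk_bounded_subset_le _ _
    _ ≤ K1 ^ K0 := by
        apply Cardinal.power_le_power_right
        apply max_le (mk_Iio_w2_le hδ) (Cardinal.aleph0_le_aleph 1)
    _ = K1 := K1_pow_K0 hCH

section Delta
variable (x : Ordi → Set Ordi)

/-- the set of indices `ξ < w2` whose `x ξ` below `ξ` is bounded by `δ` -/
def Gd (δ : Ordi) : Set Ordi := {ξ | ξ < w2 ∧ x ξ ∩ Set.Iio ξ ⊆ Set.Iio δ}

def hh (δ : Ordi) : Ordi := sSup ((fun ξ => ξ + 1) '' Gd x δ)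

def HH (δ : Ordi) : Ordi := max (hh x δ) (δ + 1)

lemma Gd_mono {δ δ' : Ordi} (h : δ ≤ δ') : Gd x δ ⊆ Gd x δ' := by
  intro ξ hξ
  exact ⟨hξ.1, fun y hy => lt_of_lt_of_le (hξ.2 hy) h⟩

lemma Gd_bdd (δ : Ordi) : BddAbove ((fun ξ => ξ + 1) '' Gd x δ) := by
  refine ⟨w2, ?_⟩
  rintro y ⟨ξ, hξ, rfl⟩
  exact Order.succ_le_of_lt hξ.1

lemma hh_mono : Monotone (hh x) := fun δ δ' h => by
  rcases Set.eq_empty_or_nonempty (Gd x δ) with he | hne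
  · unfold hh
    rw [he, Set.image_empty, csSup_empty]
    exact bot_le
  · exact csSup_le_csSup (Gd_bdd x δ') (hne.image _) (Set.image_mono (Gd_mono x h))

lemma HH_mono : Monotone (HH x) := fun δ δ' h =>
  max_le_max (hh_mono x h) (by simpa using h)

lemma hh_lt_w2 {δ : Ordi} (h : #(Gd x δ) ≤ K1) : hh x δ < w2 := by
  apply sSup_lt_w2
  · rintro y ⟨ξ, hξ, rfl⟩
    exact w2_isLimit.succ_lt hξ.1
  · exact le_trans Cardinal.mk_image_le h

/-- the recursively defined `ω₁`-chain of closure points -/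
def ff : Ordi → Ordi :=
  (wellFounded_lt (α := Ordi)).fix fun i rec =>
    HH x (sSup (Set.range fun j : ↥(Set.Iio i) => rec j.1 j.2 + 1))

lemma ff_eq (i : Ordi) :
    ff x i = HH x (sSup (Set.range fun j : ↥(Set.Iio i) => ff x j.1 + 1)) := by
  exact WellFounded.fix_eq _ _ i

lemma ff_strictMono : StrictMono (ff x) := by
  intro j i hji
  have hbdd : BddAbove (Set.range fun j : ↥(Set.Iio i) => ff x j.1 + 1) :=
    Ordinal.bddAbove_of_small
  have hmem : ff x j + 1 ≤ sSup (Set.range fun j : ↥(Set.Iio i) => ff x j.1 + 1) :=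
    le_csSup hbdd ⟨⟨j, hji⟩, rfl⟩
  calc ff x j < ff x j + 1 := lt_add_one _
    _ ≤ sSup (Set.range fun j : ↥(Set.Iio i) => ff x j.1 + 1) := hmem
    _ < _ + 1 := lt_add_one _
    _ ≤ HH x _ := le_max_right _ _
    _ = ff x i := (ff_eq x i).symm

lemma ff_lt_w2 (hsm : ∀ δ, δ < w2 → #(Gd x δ) ≤ K1) :
    ∀ i, i < w1 → ff x i < w2 := by
  intro i
  induction i using Ordinal.induction with
  | h i IH =>
    intro hi
    rw [ff_eq]
    set S := Set.range fun j : ↥(Set.Iio i) => ff x j.1 + 1 with hS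
    have hd : sSup S < w2 := by
      apply sSup_lt_w2
      · rintro y ⟨j, rfl⟩
        exact w2_isLimit.succ_lt (IH j.1 j.2 (lt_trans j.2 hi))
      · calc #S ≤ #(↥(Set.Iio i)) := Cardinal.mk_range_le
          _ = Cardinal.lift.{1} i.card := Ordinal.mk_Iio_ordinal i
          _ ≤ Cardinal.lift.{1} (Cardinal.aleph 0) := by
              apply Cardinal.lift_le.mpr
              rw [← Order.lt_succ_iff, ← aleph1_eq, ← Cardinal.lt_ord]
              exact hi
          _ ≤ K1 := by rw [lift_aleph0']; exact Cardinal.aleph0_le_aleph 1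
    have h1 : hh x (sSup S) < w2 := hh_lt_w2 x (hsm _ hd)
    have h2 : sSup S + 1 < w2 := w2_isLimit.succ_lt hd
    exact max_lt h1 h2
end Delta

/-- Key "pressing-down" claim: for a family of countable subsets of `Iio w2`,
there is `δ < w2` such that non-`K1`-many `ξ` have `x ξ ∩ Iio ξ ⊆ Iio δ`. -/
lemma exists_delta (x : Ordi → Set Ordi) (hxc : ∀ ξ, (x ξ).Countable) :
    ∃ δ, δ < w2 ∧ ¬ #(Gd x δ) ≤ K1 := by
  by_contra hcon
  push_neg at hcon
  have hsm : ∀ δ, δ < w2 → #(Gd x δ) ≤ K1 := fun δ h => hcon δ h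
  -- the closure point δ*
  set F : ↥(Set.Iio w1) → Ordi := fun i => ff x i.1 with hF
  have hFlt : ∀ i : ↥(Set.Iio w1), F i < w2 := fun i => ff_lt_w2 x hsm i.1 i.2
  have hFbdd : BddAbove (Set.range F) := ⟨w2, by rintro y ⟨i, rfl⟩; exact (hFlt i).le⟩
  set ds : Ordi := sSup (Set.range F) with hds
  have hdslt : ds < w2 := by
    apply sSup_lt_w2
    · rintro y ⟨i, rfl⟩; exact hFlt i
    · calc #(Set.range F) ≤ #(↥(Set.Iio w1)) := Cardinal.mk_range_le
        _ = Cardinal.lift.{1} w1.card := Ordinal.mk_Iio_ordinal w1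
        _ = K1 := by rw [w1, Cardinal.card_ord]; exact lift_aleph1
  -- choose indices dominating elements of `x ds ∩ Iio ds`
  set g : Ordi → Ordi := fun y =>
    if h : ∃ i : ↥(Set.Iio w1), y < F i then h.choose.1 + 1 else 0 with hg
  have hglt : ∀ y, g y < w1 := by
    intro y
    simp only [hg]
    split
    · next h => exact w1_isLimit.succ_lt h.choose.2
    · exact w1_pos
  set istar : Ordi := sSup (g '' (x ds ∩ Set.Iio ds)) with histar
  have histarlt : istar < w1 := by
    apply sSup_lt_w1
    · rintro y ⟨z, _, rfl⟩; exact hglt z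
    · exact ((hxc ds).mono Set.inter_subset_left).image _
  have histarbdd : BddAbove (g '' (x ds ∩ Set.Iio ds)) := ⟨w1, by
    rintro y ⟨z, _, rfl⟩; exact (hglt z).le⟩
  -- x ds ∩ Iio ds ⊆ Iio (ff x istar)
  have hxb : x ds ∩ Set.Iio ds ⊆ Set.Iio (ff x istar) := by
    intro y hy
    have hylt : y < sSup (Set.range F) := hy.2
    have hE : ∃ i : ↥(Set.Iio w1), y < F i := by
      obtain ⟨v, ⟨i, rfl⟩, hv⟩ := exists_lt_of_lt_csSup (s := Set.range F)
        ⟨F ⟨0, w1_pos⟩, ⟨_, rfl⟩⟩ hylt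
      exact ⟨i, hv⟩
    have hgy : g y = hE.choose.1 + 1 := by rw [hg]; exact dif_pos hE
    have h1 : hE.choose.1 + 1 ≤ istar := by
      rw [← hgy]
      exact le_csSup histarbdd ⟨y, hy, rfl⟩
    have h2 : hE.choose.1 < istar := lt_of_lt_of_le (lt_add_one _) h1
    exact lt_trans hE.choose_spec (ff_strictMono x h2)
  have histarlt' : istar + 1 < w1 := w1_isLimit.succ_lt histarlt
  -- ds is in Gd x (ff x istar)
  have hmem : ds ∈ Gd x (ff x istar) := ⟨hdslt, hxb⟩
  have c1 : ds + 1 ≤ hh x (ff x istar) :=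
    le_csSup (Gd_bdd x _) ⟨ds, hmem, rfl⟩
  have c2 : HH x (ff x istar) ≤ ff x (istar + 1) := by
    rw [ff_eq x (istar + 1)]
    apply HH_mono
    have hm : ff x istar + 1 ≤
        sSup (Set.range fun j : ↥(Set.Iio (istar + 1)) => ff x j.1 + 1) :=
      le_csSup (Ordinal.bddAbove_of_small) ⟨⟨istar, Set.mem_Iio.mpr (lt_add_one _)⟩, rfl⟩
    exact le_trans (lt_add_one _).le hm
  have c3 : ff x (istar + 1) ≤ ds := le_csSup hFbdd ⟨⟨istar + 1, histarlt'⟩, rfl⟩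
  have : ds + 1 ≤ ds :=
    le_trans c1 (le_trans (le_max_left _ _) (le_trans c2 c3))
  exact absurd (lt_of_lt_of_le (lt_add_one ds) this) (lt_irrefl ds)

abbrev K2 : Cardinal.{1} := Cardinal.aleph 2

lemma lift_aleph2 : Cardinal.lift.{1} (Cardinal.aleph (2:Ordinal.{0})) = K2 := by
  rw [Cardinal.lift_aleph]; norm_num

lemma mk_Iio_w2 : #(↥(Set.Iio w2)) = K2 := by
  rw [Ordinal.mk_Iio_ordinal, w2, Cardinal.card_ord]; exact lift_aleph2

lemma exists_pair_embedding :
    Nonempty ((↥(Set.Iio w2) × ↥(Set.Iio w2)) ↪ ↥(Set.Iio w2)) := by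
  rw [← Cardinal.le_def, Cardinal.mk_prod, Cardinal.lift_id, mk_Iio_w2,
    Cardinal.mul_eq_self (Cardinal.aleph0_le_aleph 2)]

/-- if two conditions agree on their common domain and have no cross-collisions,
they are compatible. -/
lemma compat (P Q : CCond)
    (hdom : ∀ z ∈ P.dom, z ∈ Q.dom → P.val z = Q.val z)
    (hcol : ∀ β γ γ', (β,γ) ∈ P.dom → (β,γ') ∈ Q.dom →
      P.val (β,γ) = Q.val (β,γ') → γ = γ') :
    CCompatible P Q := by
  refine ⟨⟨P.dom ∪ Q.dom, fun z => if z ∈ P.dom then P.val z else Q.val z,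
    P.dom_countable.union Q.dom_countable, ?_, ?_, ?_⟩, ⟨?_, ?_⟩, ⟨?_, ?_⟩⟩
  · rintro z (hz | hz)
    · exact P.dom_subset z hz
    · exact Q.dom_subset z hz
  · rintro z (hz | hz)
    · simp only [if_pos hz]; exact P.mapsTo z hz
    · by_cases h : z ∈ P.dom
      · simp only [if_pos h]; exact P.mapsTo z h
      · simp only [if_neg h]; exact Q.mapsTo z hz
  · intro β γ γ' h1 h2 hval
    by_cases hγ : (β,γ) ∈ P.dom <;> by_cases hγ' : (β,γ') ∈ P.dom
    · simp only [if_pos hγ, if_pos hγ'] at hval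
      exact P.injOn β γ γ' hγ hγ' hval
    · have hq : (β,γ') ∈ Q.dom := h2.resolve_left hγ'
      simp only [if_pos hγ, if_neg hγ'] at hval
      exact hcol β γ γ' hγ hq hval
    · have hq : (β,γ) ∈ Q.dom := h1.resolve_left hγ
      simp only [if_neg hγ, if_pos hγ'] at hval
      exact (hcol β γ' γ hγ' hq hval.symm).symm
    · have hq : (β,γ) ∈ Q.dom := h1.resolve_left hγ
      have hq' : (β,γ') ∈ Q.dom := h2.resolve_left hγ'
      simp only [if_neg hγ, if_neg hγ'] at hval
      exact Q.injOn β γ γ' hq hq' hval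
  · exact Set.subset_union_left
  · intro z hz; simp only [if_pos hz]
  · exact Set.subset_union_right
  · intro z hz
    by_cases h : z ∈ P.dom
    · simp only [if_pos h]; exact hdom z h hz
    · simp only [if_neg h]

section Coding
variable (e : (↥(Set.Iio w2) × ↥(Set.Iio w2)) ↪ ↥(Set.Iio w2))

def toSub (o : Ordi) : ↥(Set.Iio w2) := if h : o < w2 then ⟨o, h⟩ else ⟨0, w2_pos⟩

lemma toSub_val {o : Ordi} (h : o < w2) : (toSub o).1 = o := by
  unfold toSub; rw [dif_pos h]

lemma one_lt_w2 : (1:Ordi) < w2 := by simpa using w2_isLimit.succ_lt w2_pos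

def cD (β γ : Ordi) : Ordi := (e (e (toSub β, toSub γ), toSub 0)).1

def cT (β α : Ordi) : Ordi := (e (e (toSub β, toSub α), toSub 1)).1

lemma cD_lt (β γ : Ordi) : cD e β γ < w2 := (e _).2
lemma cT_lt (β α : Ordi) : cT e β α < w2 := (e _).2

lemma cD_inj {β γ β' γ' : Ordi} (hβ : β < w2) (hγ : γ < w2) (hβ' : β' < w2) (hγ' : γ' < w2)
    (h : cD e β γ = cD e β' γ') : β = β' ∧ γ = γ' := by
  unfold cD at h
  have h1 := e.injective (Subtype.val_injective h)
  have h2 := e.injective (congrArg Prod.fst h1)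
  have hb := congrArg (Subtype.val ∘ Prod.fst) h2
  have hg := congrArg (Subtype.val ∘ Prod.snd) h2
  simp only [Function.comp] at hb hg
  rw [toSub_val hβ, toSub_val hβ'] at hb
  rw [toSub_val hγ, toSub_val hγ'] at hg
  exact ⟨hb, hg⟩

lemma cD_ne_cT (β γ β' α' : Ordi) : cD e β γ ≠ cT e β' α' := by
  intro h
  unfold cD cT at h
  have h1 := e.injective (Subtype.val_injective h)
  have h2 := congrArg (Subtype.val ∘ Prod.snd) h1
  simp only [Function.comp] at h2
  rw [toSub_val w2_pos, toSub_val one_lt_w2] at h2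
  exact zero_ne_one h2

lemma cT_inj {β α β' α' : Ordi} (hβ : β < w2) (hα : α < w2) (hβ' : β' < w2) (hα' : α' < w2)
    (h : cT e β α = cT e β' α') : β = β' ∧ α = α' := by
  unfold cT at h
  have h1 := e.injective (Subtype.val_injective h)
  have h2 := e.injective (congrArg Prod.fst h1)
  have hb := congrArg (Subtype.val ∘ Prod.fst) h2
  have hg := congrArg (Subtype.val ∘ Prod.snd) h2
  simp only [Function.comp] at hb hg
  rw [toSub_val hβ, toSub_val hβ'] at hb
  rw [toSub_val hα, toSub_val hα'] at hg
  exact ⟨hb, hg⟩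

variable (p : Ordi → CCond)

/-- the coded trace of the condition `p ξ` -/
def xset (ξ : Ordi) : Set Ordi :=
  (fun z : Ordi × Ordi => cD e z.1 z.2) '' (p ξ).dom ∪
    (fun z : Ordi × Ordi => cT e z.1 ((p ξ).val z)) '' (p ξ).dom

lemma xset_countable (ξ : Ordi) : (xset e p ξ).Countable :=
  ((p ξ).dom_countable.image _).union ((p ξ).dom_countable.image _)

lemma xset_sub (ξ : Ordi) : xset e p ξ ⊆ Set.Iio w2 := by
  rintro c (⟨z, _, rfl⟩ | ⟨z, _, rfl⟩)
  · exact cD_lt e _ _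
  · exact cT_lt e _ _

lemma memD {ξ : Ordi} {z : Ordi × Ordi} (hz : z ∈ (p ξ).dom) : cD e z.1 z.2 ∈ xset e p ξ :=
  Or.inl ⟨z, hz, rfl⟩

lemma memT {ξ : Ordi} {z : Ordi × Ordi} (hz : z ∈ (p ξ).dom) :
    cT e z.1 ((p ξ).val z) ∈ xset e p ξ := Or.inr ⟨z, hz, rfl⟩

/-- decoding a `cD`-code: if `cD e β γ` is in the trace of `p ξ`, with `β, γ` in
range, then `(β, γ)` is in the domain of `p ξ`. -/
lemma decodeD {ξ : Ordi} {β γ : Ordi} (hβ : β < w2) (hγ : γ < w2)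
    (h : cD e β γ ∈ xset e p ξ) : (β, γ) ∈ (p ξ).dom := by
  rcases h with ⟨z, hz, hc⟩ | ⟨z, hz, hc⟩
  · have hb := (p ξ).dom_subset z hz
    obtain ⟨h1, h2⟩ := cD_inj e hb.2.1 (lt_trans hb.2.2 hb.2.1) hβ hγ hc
    rwa [← h1, ← h2, Prod.mk.eta]
  · exact absurd hc.symm (cD_ne_cT e β γ _ _)
end Coding

lemma mk_Iio_w1 : #(↥(Set.Iio w1)) = K1 := by
  rw [Ordinal.mk_Iio_ordinal, w1, Cardinal.card_ord]; exact lift_aleph1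

lemma mk_Iic_le {y : Ordi} (h : y < w2) : #(↥(Set.Iic y)) ≤ K1 := by
  refine le_trans (Cardinal.mk_le_mk_of_subset (?_ : Set.Iic y ⊆ Set.Iio (y+1))) ?_
  · intro z hz; exact lt_of_le_of_lt hz (lt_add_one y)
  · exact mk_Iio_w2_le (w2_isLimit.succ_lt h)

lemma aleph_two_eq_succ : (Cardinal.aleph 2 : Cardinal.{u}) = Order.succ (Cardinal.aleph 1) := by
  rw [show (2:Ordinal.{u}) = Order.succ 1 by norm_num, Cardinal.aleph_succ]

lemma mk_fun_le (hCH : (2 : Cardinal.{1}) ^ Cardinal.aleph0 = Cardinal.aleph 1)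
    {R : Set Ordi} (hRc : R.Countable) :
    #(↥R → Option ↥(Set.Iio w1)) ≤ K1 := by
  have h1 : #(↥R → Option ↥(Set.Iio w1)) = #(Option ↥(Set.Iio w1)) ^ #(↥R) :=
    (Cardinal.power_def _ _).symm
  rw [h1, Cardinal.mk_option, mk_Iio_w1]
  have h2 : K1 + 1 = K1 := Cardinal.add_one_eq (Cardinal.aleph0_le_aleph 1)
  rw [h2]
  calc K1 ^ #(↥R) ≤ K1 ^ K0 := by
        apply Cardinal.power_le_power_left
        · exact ne_of_gt (lt_of_lt_of_le Cardinal.aleph0_pos (Cardinal.aleph0_le_aleph 1))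
        · exact Cardinal.le_aleph0_iff_set_countable.mpr hRc
    _ = K1 := K1_pow_K0 hCH

theorem CCond_omega2_cc_aux (hCH : (2 : Cardinal.{1}) ^ Cardinal.aleph0 = Cardinal.aleph 1)
    (A : Set CCond)
    (hA : ∀ p ∈ A, ∀ q ∈ A, p ≠ q → ¬ CCompatible p q) :
    Cardinal.mk ↥A ≤ Cardinal.aleph 1 := by
  by_contra hbig
  have h2 : K2 ≤ #(↥A) := by
    exact le_trans (le_of_eq aleph_two_eq_succ) (Order.succ_le_of_lt (not_le.mp hbig))
  obtain ⟨F⟩ : Nonempty (↥(Set.Iio w2) ↪ ↥A) := by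
    rw [← Cardinal.le_def, mk_Iio_w2]; exact h2
  obtain ⟨e⟩ := exists_pair_embedding
  set p : Ordi → CCond := fun ξ => if h : ξ < w2 then (F ⟨ξ, h⟩).1 else (F ⟨0, w2_pos⟩).1
    with hp
  have hpA : ∀ ξ, p ξ ∈ A := by
    intro ξ; simp only [hp]; split <;> exact Subtype.coe_prop _
  have hpinj : ∀ ξ η, ξ < w2 → η < w2 → ξ ≠ η → p ξ ≠ p η := by
    intro ξ η h1 h2' hne
    simp only [hp, dif_pos h1, dif_pos h2']
    intro hcon
    exact hne (congrArg Subtype.val (F.injective (Subtype.val_injective hcon)))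
  set x : Ordi → Set Ordi := xset e p with hx
  obtain ⟨δ, hδ, hG⟩ := exists_delta x (xset_countable e p)
  -- restrict to indices above δ
  set G0 : Set Ordi := Gd x δ ∩ Set.Ioi δ with hG0def
  have hG0 : ¬ #(↥G0) ≤ K1 := by
    intro h
    apply hG
    have hsub : Gd x δ ⊆ G0 ∪ Set.Iic δ := by
      intro ξ hξ
      by_cases hc : δ < ξ
      · exact Or.inl ⟨hξ, hc⟩
      · exact Or.inr (not_lt.mp hc)
    calc #(↥(Gd x δ)) ≤ #(↥(G0 ∪ Set.Iic δ)) := Cardinal.mk_le_mk_of_subset hsub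
      _ ≤ #(↥G0) + #(↥(Set.Iic δ)) := Cardinal.mk_union_le _ _
      _ ≤ K1 + K1 := add_le_add h (mk_Iic_le hδ)
      _ = K1 := Cardinal.add_eq_self (Cardinal.aleph0_le_aleph 1)
  -- pigeonhole 1: the root
  set T1 : Type 1 := {S : Set Ordi // S ⊆ Set.Iio δ ∧ S.Countable} with hT1
  set f1 : Ordi → T1 := fun ξ => ⟨x ξ ∩ Set.Iio δ, Set.inter_subset_right,
    ((xset_countable e p ξ).mono Set.inter_subset_left)⟩ with hf1
  obtain ⟨t1, hG1big⟩ := pigeon hG0 (mk_countable_subsets hCH hδ) f1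
  set G1 : Set Ordi := {ξ ∈ G0 | f1 ξ = t1} with hG1def
  set R : Set Ordi := t1.1 with hR
  have hRc : R.Countable := t1.2.2
  have hxR : ∀ ξ ∈ G1, x ξ ∩ Set.Iio δ = R := by
    intro ξ hξ
    have := congrArg Subtype.val hξ.2
    simpa [hf1] using this
  -- pigeonhole 2: the values on the root
  set v : Ordi → (↥R → Option ↥(Set.Iio w1)) := fun ξ c =>
    if h : ∃ z ∈ (p ξ).dom, cD e z.1 z.2 = c.1 then
      some ⟨(p ξ).val h.choose, (p ξ).mapsTo h.choose h.choose_spec.1⟩ else none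
    with hv
  obtain ⟨v0, hG2big⟩ := pigeon hG1big (mk_fun_le hCH hRc) v
  set G2 : Set Ordi := {ξ ∈ G1 | v ξ = v0} with hG2def
  -- evaluation of v
  have hv_eval : ∀ ξ z (hz : z ∈ (p ξ).dom) (hc : cD e z.1 z.2 ∈ R),
      v ξ ⟨cD e z.1 z.2, hc⟩ = some ⟨(p ξ).val z, (p ξ).mapsTo z hz⟩ := by
    intro ξ z hz hc
    have hex : ∃ z' ∈ (p ξ).dom, cD e z'.1 z'.2 = cD e z.1 z.2 := ⟨z, hz, rfl⟩
    have hch : hex.choose = z := by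
      have hsp := hex.choose_spec
      have hb1 := (p ξ).dom_subset _ hsp.1
      have hb2 := (p ξ).dom_subset _ hz
      obtain ⟨ha, hb⟩ := cD_inj e hb1.2.1 (lt_trans hb1.2.2 hb1.2.1)
        hb2.2.1 (lt_trans hb2.2.2 hb2.2.1) hsp.2
      exact Prod.ext ha hb
    simp only [hv]
    rw [dif_pos hex]
    congr 1
    exact Subtype.ext (congrArg (p ξ).val hch)
  -- the bad set
  set B : Set Ordi := {ξ ∈ G2 | ∃ β γ, (β, γ) ∈ (p ξ).dom ∧
    cT e β ((p ξ).val (β, γ)) ∈ R ∧ cD e β γ ∉ R} with hBdef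
  have hB : #(↥B) ≤ K1 := by
    set Bc : ↥R → Set Ordi := fun c => {ξ ∈ G2 | ∃ β γ, (β, γ) ∈ (p ξ).dom ∧
      cT e β ((p ξ).val (β, γ)) = c.1 ∧ cD e β γ ∉ R} with hBc
    have hBsub : B ⊆ ⋃ (c : ↥R), Bc c := by
      rintro ξ ⟨hξ, β, γ, hd, hcT, hcD⟩
      exact Set.mem_iUnion.mpr ⟨⟨_, hcT⟩, hξ, β, γ, hd, rfl, hcD⟩
    have hBclt : ∀ c, #(↥(Bc c)) ≤ K1 := by
      intro c
      rcases (Bc c).eq_empty_or_nonempty with he | ⟨ξ₀, hξ₀⟩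
      · rw [he]; simp
      obtain ⟨hξ₀G, β₀, γ₀, hd₀, hcT₀, hcD₀⟩ := hξ₀
      have hβ₀ : β₀ < w2 := ((p ξ₀).dom_subset _ hd₀).2.1
      have hsub2 : Bc c ⊆ ⋃ (γ : ↥(Set.Iio β₀)), Set.Iic (cD e β₀ γ.1) := by
        rintro ξ ⟨hξG, β, γ, hd, hcT, hcD⟩
        have hβ : β < w2 := ((p ξ).dom_subset _ hd).2.1
        have hvw : (p ξ).val (β, γ) < w2 := lt_trans ((p ξ).mapsTo _ hd) w1_lt_w2
        have hvw₀ : (p ξ₀).val (β₀, γ₀) < w2 := lt_trans ((p ξ₀).mapsTo _ hd₀) w1_lt_w2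
        obtain ⟨hββ₀, -⟩ := cT_inj e hβ hvw hβ₀ hvw₀ (hcT.trans hcT₀.symm)
        have hγβ₀ : γ < β₀ := by
          rw [← hββ₀]
          exact ((p ξ).dom_subset _ hd).2.2
        have hcd_mem : cD e β γ ∈ x ξ := memD e p hd
        have hξle : ξ ≤ cD e β γ := by
          by_contra hlt
          push_neg at hlt
          have h5 : cD e β γ < δ := hξG.1.1.1.2 ⟨hcd_mem, hlt⟩
          have h6 : cD e β γ ∈ x ξ ∩ Set.Iio δ := ⟨hcd_mem, h5⟩
          rw [hxR ξ hξG.1] at h6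
          exact hcD h6
        refine Set.mem_iUnion.mpr ⟨⟨γ, hγβ₀⟩, ?_⟩
        show ξ ∈ Set.Iic (cD e β₀ γ)
        rw [← hββ₀]
        exact hξle
      calc #(↥(Bc c)) ≤ #(↥(⋃ (γ : ↥(Set.Iio β₀)), Set.Iic (cD e β₀ γ.1))) :=
            Cardinal.mk_le_mk_of_subset hsub2
        _ ≤ Cardinal.sum (fun γ : ↥(Set.Iio β₀) => #(↥(Set.Iic (cD e β₀ γ.1)))) :=
            Cardinal.mk_iUnion_le_sum_mk
        _ ≤ Cardinal.sum (fun _ : ↥(Set.Iio β₀) => K1) :=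
            Cardinal.sum_le_sum _ _ (fun γ => mk_Iic_le (cD_lt e _ _))
        _ = #(↥(Set.Iio β₀)) * K1 := by simp [Cardinal.sum_const']
        _ ≤ K1 * K1 := mul_le_mul_left (mk_Iio_w2_le hβ₀) _
        _ = K1 := Cardinal.mul_eq_self (Cardinal.aleph0_le_aleph 1)
    calc #(↥B) ≤ #(↥(⋃ (c : ↥R), Bc c)) := Cardinal.mk_le_mk_of_subset hBsub
      _ ≤ Cardinal.sum (fun c : ↥R => #(↥(Bc c))) := Cardinal.mk_iUnion_le_sum_mk
      _ ≤ Cardinal.sum (fun _ : ↥R => K1) := Cardinal.sum_le_sum _ _ hBclt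
      _ = #(↥R) * K1 := by simp [Cardinal.sum_const']
      _ ≤ K1 * K1 := mul_le_mul_left
          (le_trans (Cardinal.le_aleph0_iff_set_countable.mpr hRc)
            (Cardinal.aleph0_le_aleph 1)) _
      _ = K1 := Cardinal.mul_eq_self (Cardinal.aleph0_le_aleph 1)
  -- the good indices
  have hG3 : ¬ #(↥(G2 \ B)) ≤ K1 := by
    intro h
    apply hG2big
    have hsub : G2 ⊆ (G2 \ B) ∪ B := by
      intro ξ hξ
      by_cases hb : ξ ∈ B
      · exact Or.inr hb
      · exact Or.inl ⟨hξ, hb⟩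
    calc #(↥G2) ≤ #(↥((G2 \ B) ∪ B)) := Cardinal.mk_le_mk_of_subset hsub
      _ ≤ #(↥(G2 \ B)) + #(↥B) := Cardinal.mk_union_le _ _
      _ ≤ K1 + K1 := add_le_add h hB
      _ = K1 := Cardinal.add_eq_self (Cardinal.aleph0_le_aleph 1)
  -- pick the pair
  obtain ⟨ξ, hξ⟩ : (G2 \ B).Nonempty := by
    rcases (G2 \ B).eq_empty_or_nonempty with he | h
    · exfalso; apply hG3; rw [he]; simp
    · exact h
  have hξG2 : ξ ∈ G2 := hξ.1
  have hξG1 : ξ ∈ G1 := hξG2.1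
  have hξG0 : ξ ∈ G0 := hξG1.1
  have hξw2 : ξ < w2 := hξG0.1.1
  have hsupx : sSup (x ξ) < w2 :=
    sSup_lt_w2 (fun y hy => xset_sub e p ξ hy)
      (le_trans (Cardinal.le_aleph0_iff_set_countable.mpr (xset_countable e p ξ))
        (Cardinal.aleph0_le_aleph 1))
  set bd : Ordi := max (sSup (x ξ) + 1) (ξ + 1) with hbd
  have hbdlt : bd < w2 := max_lt (w2_isLimit.succ_lt hsupx) (w2_isLimit.succ_lt hξw2)
  obtain ⟨η, hη, hbdη⟩ : ∃ η ∈ G2 \ B, bd ≤ η := by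
    by_contra hcon
    push_neg at hcon
    apply hG3
    have hsub : G2 \ B ⊆ Set.Iio bd := fun η hη => hcon η hη
    exact le_trans (Cardinal.mk_le_mk_of_subset hsub) (mk_Iio_w2_le hbdlt)
  have hηG2 : η ∈ G2 := hη.1
  have hηG1 : η ∈ G1 := hηG2.1
  have hηG0 : η ∈ G0 := hηG1.1
  have hηw2 : η < w2 := hηG0.1.1
  have hξη : ξ < η := lt_of_lt_of_le (lt_of_lt_of_le (lt_add_one ξ) (le_max_right _ _)) hbdη
  have hxlt : ∀ c ∈ x ξ, c < η := by
    intro c hc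
    have h1 : c ≤ sSup (x ξ) := le_csSup ⟨w2, fun y hy => (xset_sub e p ξ hy).le⟩ hc
    calc c ≤ sSup (x ξ) := h1
      _ < sSup (x ξ) + 1 := lt_add_one _
      _ ≤ bd := le_max_left _ _
      _ ≤ η := hbdη
  -- intersection is exactly R
  have hint : x ξ ∩ x η = R := by
    apply subset_antisymm
    · rintro c ⟨hc1, hc2⟩
      by_cases hcδ : c < δ
      · have h6 : c ∈ x ξ ∩ Set.Iio δ := ⟨hc1, hcδ⟩
        rw [hxR ξ hξG1] at h6
        exact h6
      · exfalso
        exact hcδ (hηG0.1.2 ⟨hc2, hxlt c hc1⟩)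
    · intro c hc
      constructor
      · have h1 : c ∈ x ξ ∩ Set.Iio δ := by rw [hxR ξ hξG1]; exact hc
        exact h1.1
      · have h1 : c ∈ x η ∩ Set.Iio δ := by rw [hxR η hηG1]; exact hc
        exact h1.1
  -- common values on common domain
  have hdomval : ∀ z ∈ (p ξ).dom, z ∈ (p η).dom → (p ξ).val z = (p η).val z := by
    intro z hz1 hz2
    have hcR : cD e z.1 z.2 ∈ R := by
      have h6 : cD e z.1 z.2 ∈ x ξ ∩ x η := ⟨memD e p hz1, memD e p hz2⟩
      rwa [hint] at h6
    have e1 := hv_eval ξ z hz1 hcR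
    have e2 := hv_eval η z hz2 hcR
    have : v ξ = v η := hξG2.2.trans hηG2.2.symm
    rw [this] at e1
    rw [e2] at e1
    exact (congrArg Subtype.val (Option.some.inj e1)).symm
  -- no collisions
  have hcol : ∀ β γ γ', (β, γ) ∈ (p ξ).dom → (β, γ') ∈ (p η).dom →
      (p ξ).val (β, γ) = (p η).val (β, γ') → γ = γ' := by
    intro β γ γ' hd1 hd2 hval
    have hβ : β < w2 := ((p ξ).dom_subset _ hd1).2.1
    have hγ : γ < w2 := lt_trans ((p ξ).dom_subset _ hd1).2.2 hβ
    have hc1 : cT e β ((p ξ).val (β, γ)) ∈ x ξ := memT e p hd1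
    have hc2 : cT e β ((p ξ).val (β, γ)) ∈ x η := by
      rw [hval]
      exact memT e p hd2
    have hcR : cT e β ((p ξ).val (β, γ)) ∈ R := by
      have h6 : cT e β ((p ξ).val (β, γ)) ∈ x ξ ∩ x η := ⟨hc1, hc2⟩
      rwa [hint] at h6
    have hnB : ξ ∉ B := hξ.2
    have hcDR : cD e β γ ∈ R := by
      by_contra hcon
      exact hnB ⟨hξG2, β, γ, hd1, hcR, hcon⟩
    have hcDxη : cD e β γ ∈ x η := by
      have h1 : cD e β γ ∈ x η ∩ Set.Iio δ := by rw [hxR η hηG1]; exact hcDR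
      exact h1.1
    have hdη : (β, γ) ∈ (p η).dom := decodeD e p hβ hγ hcDxη
    have : (p η).val (β, γ) = (p η).val (β, γ') := by
      rw [← hdomval (β, γ) hd1 hdη, hval]
    exact (p η).injOn β γ γ' hdη hd2 this
  exact hA (p ξ) (hpA ξ) (p η) (hpA η) (hpinj ξ η hξw2 hηw2 (ne_of_lt hξη))
    (compat (p ξ) (p η) hdomval hcol)

/-- Assuming CH, the poset `ℂ` is `ω₂`-c.c.: every set of pairwise
incompatible conditions has cardinality at most `ω₁`. -/
theorem CCond_omega2_cc (hCH : (2 : Cardinal.{1}) ^ Cardinal.aleph0 = Cardinal.aleph 1)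
    (A : Set CCond)
    (hA : ∀ p ∈ A, ∀ q ∈ A, p ≠ q → ¬ CCompatible p q) :
    Cardinal.mk ↥A ≤ Cardinal.aleph 1 :=
  CCond_omega2_cc_aux hCH A hA

end
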